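/- For u > 0 and t ≥ 0, the partial sums Φ_n(t,u) = ∑_{m=0}^{n} ((-t)^m e^{−u}/m!)(u^m − 2m u^{m−1} + m(m−1) u^{m−2}) of the DJM series for the breakage equation with S(v) = v, B(u,v) = 2/v and initial data e^{−u} satisfy: for every fixed t ≥ 0 and every compact set of volumes [a,b] ⊂ (0,∞), Φ_n converges uniformly on [a,b] to (1+t)^2 e^{−u(1+t)} as n → ∞. -/

import Mathlib

open Filter

private lemma djm_exp_tsum (x : ℝ) : ∑' m : ℕ, x ^ m / m.factorial = Real.exp x := by
  rw [Real.exp_eq_exp_ℝ, NormedSpace.exp_eq_tsum_div]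

private lemma djm_tsum (t u : ℝ) :
    ∑' m : ℕ, ((-t) ^ m * Real.exp (-u) / m.factorial) *
        (u ^ m - 2 * m * u ^ (m - 1) + m * (m - 1) * u ^ (m - 2))
      = (1 + t) ^ 2 * Real.exp (-u * (1 + t)) := by
  set E := Real.exp (-u) with hE
  set g1 : ℕ → ℝ := fun m => E * ((-t * u) ^ m / m.factorial) with hg1
  set g2 : ℕ → ℝ := fun m =>
    ((-t) ^ m * E / m.factorial) * (-(2 * m * u ^ (m - 1))) with hg2
  set g3 : ℕ → ℝ := fun m =>
    ((-t) ^ m * E / m.factorial) * (m * ((m : ℝ) - 1) * u ^ (m - 2)) with hg3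
  have hg2s : ∀ m : ℕ, g2 (m + 1) = (2 * t * E) * ((-t * u) ^ m / m.factorial) := by
    intro m
    have hfac : (((m + 1).factorial : ℝ)) = (m + 1) * m.factorial := by
      exact_mod_cast Nat.factorial_succ m
    have hfm : (m.factorial : ℝ) ≠ 0 := by exact_mod_cast m.factorial_ne_zero
    have hm1 : ((m : ℝ) + 1) ≠ 0 := by positivity
    simp only [hg2, Nat.add_sub_cancel, hfac, pow_succ, Nat.cast_add, Nat.cast_one,
      mul_pow]
    field_simp
  have hg3s : ∀ m : ℕ, g3 (m + 2) = (t ^ 2 * E) * ((-t * u) ^ m / m.factorial) := by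
    intro m
    have hfac : (((m + 2).factorial : ℝ)) = (m + 2) * ((m + 1) * m.factorial) := by
      push_cast [Nat.factorial_succ]
      ring
    have hfm : (m.factorial : ℝ) ≠ 0 := by exact_mod_cast m.factorial_ne_zero
    have hm1 : ((m : ℝ) + 1) ≠ 0 := by positivity
    have hm2 : ((m : ℝ) + 2) ≠ 0 := by positivity
    simp only [hg3, Nat.add_sub_cancel, hfac, pow_succ, Nat.cast_add, Nat.cast_ofNat,
      mul_pow]
    field_simp
    ring
  have hs1 : Summable g1 := (Real.summable_pow_div_factorial (-t * u)).mul_left E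
  have hs2' : Summable (fun m => g2 (m + 1)) := by
    have := (Real.summable_pow_div_factorial (-t * u)).mul_left (2 * t * E)
    exact this.congr fun m => (hg2s m).symm
  have hs2 : Summable g2 := (summable_nat_add_iff 1).mp hs2'
  have hs3'' : Summable (fun m => g3 (m + 2)) := by
    have := (Real.summable_pow_div_factorial (-t * u)).mul_left (t ^ 2 * E)
    exact this.congr fun m => (hg3s m).symm
  have hs3' : Summable (fun m => g3 (m + 1)) := by
    exact (summable_nat_add_iff 1).mp (by exact_mod_cast hs3'')
  have hs3 : Summable g3 := (summable_nat_add_iff 1).mp hs3'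
  have T1 : ∑' m, g1 m = E * Real.exp (-t * u) := by
    rw [hg1, tsum_mul_left, djm_exp_tsum]
  have T2 : ∑' m, g2 m = 2 * t * E * Real.exp (-t * u) := by
    rw [Summable.tsum_eq_zero_add hs2]
    have h0 : g2 0 = 0 := by simp [hg2]
    have : ∑' m, g2 (m + 1) = (2 * t * E) * Real.exp (-t * u) := by
      rw [tsum_congr hg2s, tsum_mul_left, djm_exp_tsum]
    rw [h0, this]
    ring
  have T3 : ∑' m, g3 m = t ^ 2 * E * Real.exp (-t * u) := by
    rw [Summable.tsum_eq_zero_add hs3, Summable.tsum_eq_zero_add hs3']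
    have h0 : g3 0 = 0 := by simp [hg3]
    have h1 : g3 (0 + 1) = 0 := by norm_num [hg3]
    have : ∑' m, g3 (m + 1 + 1) = (t ^ 2 * E) * Real.exp (-t * u) := by
      rw [tsum_congr (fun m => hg3s m), tsum_mul_left, djm_exp_tsum]
    rw [h0, h1, this]
    ring
  have hsplit : ∀ m : ℕ,
      ((-t) ^ m * Real.exp (-u) / m.factorial) *
          (u ^ m - 2 * m * u ^ (m - 1) + m * (m - 1) * u ^ (m - 2))
        = g1 m + g2 m + g3 m := by
    intro m
    simp only [hg1, hg2, hg3, ← hE, mul_pow]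
    ring
  rw [tsum_congr hsplit, Summable.tsum_add (hs1.add hs2) hs3, Summable.tsum_add hs1 hs2, T1, T2, T3]
  have hEX : E * Real.exp (-t * u) = Real.exp (-u * (1 + t)) := by
    rw [hE, ← Real.exp_add]
    congr 1
    ring
  nlinarith [hEX]

private lemma djm_sq_le (m : ℕ) : ((m : ℝ)) ^ 2 + 2 * m + 1 ≤ 4 ^ m := by
  induction m with
  | zero => norm_num
  | succ n ih =>
    push_cast [pow_succ]
    push_cast at ih
    nlinarith [sq_nonneg (n : ℝ), ih, pow_nonneg (by norm_num : (0:ℝ) ≤ 4) n]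

/-- Uniform convergence on compact volume sets of the DJM partial sums
`Φ_n(t,u) = ∑_{m=0}^n ((-t)^m e^{-u}/m!)(u^m - 2m u^{m-1} + m(m-1) u^{m-2})`
to the exact solution `(1+t)^2 e^{-u(1+t)}` of the breakage equation with
`S(v)=v`, `B(u,v)=2/v` and initial datum `e^{-u}`. -/
theorem djm_partial_sums_tendstoUniformlyOn_linear_selection
    (t : ℝ) (ht : 0 ≤ t) (a b : ℝ) (ha : 0 < a) (hab : a ≤ b) :
    TendstoUniformlyOn
      (fun n u => ∑ m ∈ Finset.range (n + 1),
        ((-t) ^ m * Real.exp (-u) / m.factorial) *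
          (u ^ m - 2 * m * u ^ (m - 1) + m * (m - 1) * u ^ (m - 2)))
      (fun u => (1 + t) ^ 2 * Real.exp (-u * (1 + t)))
      atTop (Set.Icc a b) := by
  set f : ℕ → ℝ → ℝ := fun m u =>
    ((-t) ^ m * Real.exp (-u) / m.factorial) *
      (u ^ m - 2 * m * u ^ (m - 1) + m * (m - 1) * u ^ (m - 2)) with hf
  set c : ℝ := max b 1 with hcdef
  have hc1 : (1 : ℝ) ≤ c := le_max_right _ _
  have hc0 : (0 : ℝ) ≤ c := by linarith
  have hM : Summable (fun m : ℕ => (4 * (t * c)) ^ m / m.factorial) :=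
    Real.summable_pow_div_factorial _
  have hbound : ∀ (m : ℕ) (u : ℝ), u ∈ Set.Icc a b →
      ‖f m u‖ ≤ (4 * (t * c)) ^ m / m.factorial := by
    intro m u hu
    have hu0 : (0 : ℝ) < u := lt_of_lt_of_le ha hu.1
    have huc : u ≤ c := le_trans hu.2 (le_max_left b 1)
    have hfm : (0 : ℝ) < m.factorial := by exact_mod_cast m.factorial_pos
    have hpow : ∀ k : ℕ, k ≤ m → u ^ (m - k) ≤ c ^ m := by
      intro k hk
      calc u ^ (m - k) ≤ c ^ (m - k) := pow_le_pow_left₀ hu0.le huc _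
        _ ≤ c ^ m := pow_le_pow_right₀ hc1 (Nat.sub_le m k)
    have hpow1 : u ^ (m - 1) ≤ c ^ m := by
      rcases Nat.eq_zero_or_pos m with h | h
      · subst h; simpa using hc1
      · exact hpow 1 h
    have hpow2 : u ^ (m - 2) ≤ c ^ m := by
      rcases lt_or_ge m 2 with h | h
      · interval_cases m
        · norm_num
        · simpa using hc1
      · exact hpow 2 h
    have hpow0 : u ^ m ≤ c ^ m := pow_le_pow_left₀ hu0.le huc _
    have habs3 : |(m : ℝ) * ((m : ℝ) - 1)| ≤ (m : ℝ) ^ 2 := by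
      rcases Nat.eq_zero_or_pos m with h | h
      · simp [h]
      · have hm1 : (1 : ℝ) ≤ (m : ℝ) := by exact_mod_cast h
        rw [abs_of_nonneg (mul_nonneg (by positivity) (by linarith))]
        nlinarith
    have h2 : |u ^ m - 2 * m * u ^ (m - 1) + m * ((m : ℝ) - 1) * u ^ (m - 2)|
        ≤ ((m : ℝ) ^ 2 + 2 * m + 1) * c ^ m := by
      have hm0 : (0 : ℝ) ≤ (m : ℝ) := Nat.cast_nonneg m
      calc |u ^ m - 2 * m * u ^ (m - 1) + m * ((m : ℝ) - 1) * u ^ (m - 2)|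
          ≤ |u ^ m - 2 * m * u ^ (m - 1)| + |(m : ℝ) * ((m : ℝ) - 1) * u ^ (m - 2)| :=
            abs_add_le _ _
        _ ≤ (|u ^ m| + |2 * m * u ^ (m - 1)|) + |(m : ℝ) * ((m : ℝ) - 1)| * |u ^ (m - 2)| := by
            rw [abs_mul]; gcongr; exact abs_sub _ _
        _ ≤ (c ^ m + 2 * m * c ^ m) + (m : ℝ) ^ 2 * c ^ m := by
            have e0 : |u ^ m| ≤ c ^ m := by
              rw [abs_of_nonneg (by positivity)]; exact hpow0
            have e1 : |2 * (m : ℝ) * u ^ (m - 1)| ≤ 2 * m * c ^ m := by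
              rw [abs_of_nonneg (by positivity)]
              exact mul_le_mul_of_nonneg_left hpow1 (by positivity)
            have e2 : |(m : ℝ) * ((m : ℝ) - 1)| * |u ^ (m - 2)| ≤ (m : ℝ) ^ 2 * c ^ m := by
              apply mul_le_mul habs3 ?_ (abs_nonneg _) (by positivity)
              rw [abs_of_nonneg (by positivity)]; exact hpow2
            linarith
        _ = ((m : ℝ) ^ 2 + 2 * m + 1) * c ^ m := by ring
    have h1 : |(-t) ^ m * Real.exp (-u) / (m.factorial : ℝ)| ≤ t ^ m / m.factorial := by
      rw [abs_div, abs_mul, abs_pow, abs_neg, abs_of_nonneg ht,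
        abs_of_nonneg (Real.exp_nonneg _), abs_of_nonneg hfm.le]
      have hexp : Real.exp (-u) ≤ 1 := Real.exp_le_one_iff.mpr (by linarith)
      calc t ^ m * Real.exp (-u) / m.factorial ≤ t ^ m * 1 / m.factorial := by
            gcongr
        _ = t ^ m / m.factorial := by ring
    calc ‖f m u‖ = |(-t) ^ m * Real.exp (-u) / (m.factorial : ℝ)| *
          |u ^ m - 2 * m * u ^ (m - 1) + m * ((m : ℝ) - 1) * u ^ (m - 2)| := by
          rw [hf]; exact abs_mul _ _
      _ ≤ (t ^ m / m.factorial) * (((m : ℝ) ^ 2 + 2 * m + 1) * c ^ m) := by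
          apply mul_le_mul h1 h2 (abs_nonneg _) (by positivity)
      _ ≤ (t ^ m / m.factorial) * (4 ^ m * c ^ m) := by
          gcongr
          exact djm_sq_le m
      _ = (4 * (t * c)) ^ m / m.factorial := by
          rw [mul_pow, mul_pow]
          ring
  have H := tendstoUniformlyOn_tsum_nat hM hbound
  have hlim : (fun u : ℝ => ∑' m, f m u)
      = fun u => (1 + t) ^ 2 * Real.exp (-u * (1 + t)) := funext fun u => djm_tsum t u
  rw [hlim] at H
  intro v hv
  exact (tendsto_add_atTop_nat 1).eventually (H v hv)
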